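/- If G is a graph with χ(G) > n and χ(K_n^G) ≤ n, then for every graph H with χ(H) > n, χ(G × H) > n. -/

import Mathlib

open SimpleGraph

universe u v w

/-- The categorical (tensor) product of two simple graphs. -/
def tensorGraph {α : Type u} {β : Type v} (G : SimpleGraph α) (H : SimpleGraph β) :
    SimpleGraph (α × β) where
  Adj p q := G.Adj p.1 q.1 ∧ H.Adj p.2 q.2
  symm := ⟨fun p q h => ⟨h.1.symm, h.2.symm⟩⟩
  loopless := ⟨fun p h => G.loopless.irrefl p.1 h.1⟩


/-- Adjacency of the exponential graph `K^G` (loops allowed). -/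
def expAdj {α : Type u} {γ : Type w} (K : SimpleGraph γ) (G : SimpleGraph α)
    (f g : α → γ) : Prop :=
  ∀ ⦃x y : α⦄, G.Adj x y → K.Adj (f x) (g y)

/-- The exponential graph `K^G` as a simple graph (loops removed). -/
def expGraph {α : Type u} {γ : Type w} (K : SimpleGraph γ) (G : SimpleGraph α) :
    SimpleGraph (α → γ) where
  Adj f g := f ≠ g ∧ expAdj K G f g
  symm := ⟨fun f g h => ⟨h.1.symm, fun x y hxy => (h.2 hxy.symm).symm⟩⟩
  loopless := ⟨fun f h => h.1 rfl⟩
theorem tensor_not_colorable_of_exp_colorable {α : Type u} (n : ℕ) (G : SimpleGraph α)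
    (hG : ¬ G.Colorable n)
    (hexp : (expGraph (⊤ : SimpleGraph (Fin n)) G).Colorable n) :
    ∀ {β : Type v} (H : SimpleGraph β), ¬ H.Colorable n →
      ¬ (tensorGraph G H).Colorable n := by
  intro β H hH hcol
  obtain ⟨C⟩ := hcol
  apply hH
  have φ : H →g expGraph (⊤ : SimpleGraph (Fin n)) G := by
    refine ⟨fun b a => C (a, b), ?_⟩
    intro b b' hbb'
    constructor
    · intro heq
      apply hG
      refine ⟨SimpleGraph.Coloring.mk (fun a => C (a, b)) ?_⟩
      intro x y hxy
      have h1 : C (x, b) ≠ C (y, b') := C.valid ⟨hxy, hbb'⟩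
      have h2 := congrFun heq y
      simpa [← h2] using h1
    · intro x y hxy
      simp only [SimpleGraph.top_adj]
      exact C.valid ⟨hxy, hbb'⟩
  obtain ⟨c⟩ := hexp
  exact ⟨(c : _ →g _).comp φ⟩
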